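/- arXiv:2102.09259 — 2 statements merged into one kernel-verified Lean document; each statement's English description precedes it below -/
import Mathlib

section
/- (Key Lemma) Let C > 0, κ ≥ 1 > λ̄ > λ̲ > 0, α ∈ (0,1). Then there exist ξ₁, γ > 0 such that for any n ∈ ℕ, any sequence {D_i}ᵢ₌₁^n in GL(d,ℝ) satisfying (C1) λ̲ ≤ m(D_i) ≤ ‖D_i‖ ≤ λ̄ < 1 for all i, and (C2) ‖D_i⋯D_1‖/m(D_i⋯D_1) ≤ κ for all i, and any sequence {y_i}ᵢ₌₀^n in ℝ^d with |y_0| ≤ ξ₁ and |y_{i+1} − D_{i+1}y_i| < C|y_i|^(1+α), one has |y_n − D_n⋯D_1 y_0| < γ|det(D_n⋯D_1)|^(1/d)|y_0|^(1+α). -/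
open MeasureTheory

noncomputable section

abbrev Euc (d : ℕ) := EuclideanSpace ℝ (Fin d)

/-- The co-norm `m(T) = inf {‖T v‖ : ‖v‖ = 1}` of a linear map. -/
def conorm {d : ℕ} (T : Euc d →L[ℝ] Euc d) : ℝ :=
  sInf ((fun v => ‖T v‖) '' {v : Euc d | ‖v‖ = 1})

/-- `blockProd D i k = D_{i+k} ∘ ⋯ ∘ D_{i+1}`. -/
def blockProd {d : ℕ} (D : ℕ → (Euc d ≃L[ℝ] Euc d)) (i : ℕ) : ℕ → (Euc d ≃L[ℝ] Euc d)
  | 0 => ContinuousLinearEquiv.refl ℝ (Euc d)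
  | k + 1 => (blockProd D i k).trans (D (i + k + 1))

/-- Determinant of an invertible continuous linear map. -/
def cdet {d : ℕ} (e : Euc d ≃L[ℝ] Euc d) : ℝ :=
  LinearMap.det ((e : Euc d →L[ℝ] Euc d).toLinearMap)

variable {d : ℕ}

lemma exists_unit (hd : 1 ≤ d) : ∃ v : Euc d, ‖v‖ = 1 := by
  refine ⟨EuclideanSpace.single ⟨0, hd⟩ (1:ℝ), ?_⟩
  simp [EuclideanSpace.norm_single]

lemma conorm_bdd (T : Euc d →L[ℝ] Euc d) :
    BddBelow ((fun v => ‖T v‖) '' {v : Euc d | ‖v‖ = 1}) :=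
  ⟨0, by rintro x ⟨v, -, rfl⟩; positivity⟩

lemma conorm_nonneg (T : Euc d →L[ℝ] Euc d) : 0 ≤ conorm T := by
  rcases Set.eq_empty_or_nonempty ((fun v => ‖T v‖) '' {v : Euc d | ‖v‖ = 1}) with h | h
  · simp [conorm, h, Real.sInf_empty]
  · exact le_csInf h (by rintro x ⟨v, -, rfl⟩; positivity)

lemma conorm_le (T : Euc d →L[ℝ] Euc d) {v : Euc d} (hv : ‖v‖ = 1) :
    conorm T ≤ ‖T v‖ :=
  csInf_le (conorm_bdd T) ⟨v, hv, rfl⟩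

lemma conorm_le_norm (hd : 1 ≤ d) (T : Euc d →L[ℝ] Euc d) : conorm T ≤ ‖T‖ := by
  obtain ⟨v, hv⟩ := exists_unit hd
  have h := T.le_opNorm v
  rw [hv, mul_one] at h
  exact (conorm_le T hv).trans h

lemma conorm_mul_le (T : Euc d →L[ℝ] Euc d) (v : Euc d) :
    conorm T * ‖v‖ ≤ ‖T v‖ := by
  rcases eq_or_ne v 0 with rfl | hv
  · simp
  · have hv' : ‖(‖v‖⁻¹ • v)‖ = 1 := by
      rw [norm_smul, norm_inv, norm_norm, inv_mul_cancel₀ (norm_ne_zero_iff.2 hv)]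
    have := conorm_le T hv'
    rw [_root_.map_smul, norm_smul, norm_inv, norm_norm] at this
    have hvpos : (0:ℝ) < ‖v‖ := norm_pos_iff.2 hv
    calc conorm T * ‖v‖ ≤ (‖v‖⁻¹ * ‖T v‖) * ‖v‖ := by nlinarith
      _ = ‖T v‖ := by field_simp

lemma le_conorm (hd : 1 ≤ d) {T : Euc d →L[ℝ] Euc d} {c : ℝ}
    (h : ∀ v : Euc d, ‖v‖ = 1 → c ≤ ‖T v‖) : c ≤ conorm T := by
  obtain ⟨v, hv⟩ := exists_unit hd
  exact le_csInf ⟨_, ⟨v, hv, rfl⟩⟩ (by rintro x ⟨w, hw, rfl⟩; exact h w hw)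

lemma conorm_refl (hd : 1 ≤ d) :
    conorm ((ContinuousLinearEquiv.refl ℝ (Euc d) : Euc d ≃L[ℝ] Euc d) :
      Euc d →L[ℝ] Euc d) = 1 := by
  apply le_antisymm
  · obtain ⟨v, hv⟩ := exists_unit hd
    simpa [hv] using conorm_le (d := d)
      ((ContinuousLinearEquiv.refl ℝ (Euc d) : Euc d ≃L[ℝ] Euc d) : Euc d →L[ℝ] Euc d) hv
  · exact le_conorm hd (fun v hv => by simp [hv])

lemma conorm_trans (hd : 1 ≤ d) (e f : Euc d ≃L[ℝ] Euc d) :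
    conorm (e : Euc d →L[ℝ] Euc d) * conorm (f : Euc d →L[ℝ] Euc d) ≤
      conorm ((e.trans f : Euc d ≃L[ℝ] Euc d) : Euc d →L[ℝ] Euc d) := by
  apply le_conorm hd
  intro v hv
  have h1 : conorm (f : Euc d →L[ℝ] Euc d) * ‖e v‖ ≤ ‖f (e v)‖ :=
    conorm_mul_le (f : Euc d →L[ℝ] Euc d) (e v)
  have h2 : conorm (e : Euc d →L[ℝ] Euc d) * ‖v‖ ≤ ‖e v‖ :=
    conorm_mul_le (e : Euc d →L[ℝ] Euc d) v
  rw [hv, mul_one] at h2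
  have := conorm_nonneg (f : Euc d →L[ℝ] Euc d)
  have := conorm_nonneg (e : Euc d →L[ℝ] Euc d)
  calc conorm (e : Euc d →L[ℝ] Euc d) * conorm (f : Euc d →L[ℝ] Euc d)
      ≤ conorm (f : Euc d →L[ℝ] Euc d) * ‖e v‖ := by nlinarith
    _ ≤ ‖f (e v)‖ := h1
    _ = ‖(e.trans f) v‖ := rfl

lemma abs_det_le (hd : 1 ≤ d) (f : Euc d →L[ℝ] Euc d) :
    |LinearMap.det (f : Euc d →ₗ[ℝ] Euc d)| ≤ ‖f‖ ^ d := by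
  have hB0 : (0:ENNReal) < volume (Metric.closedBall (0 : Euc d) 1) :=
    Metric.measure_closedBall_pos volume 0 one_pos
  have hBt : volume (Metric.closedBall (0 : Euc d) 1) ≠ ⊤ :=
    (measure_closedBall_lt_top).ne
  have himg : f '' Metric.closedBall 0 1 ⊆ Metric.closedBall 0 ‖f‖ := by
    rintro x ⟨y, hy, rfl⟩
    simp only [Metric.mem_closedBall, dist_zero_right] at *
    exact (f.le_opNorm y).trans (mul_le_of_le_one_right (norm_nonneg _) hy)
  have h1 : ENNReal.ofReal |LinearMap.det (f : Euc d →ₗ[ℝ] Euc d)| *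
      volume (Metric.closedBall (0 : Euc d) 1) ≤
      ENNReal.ofReal (‖f‖ ^ d) * volume (Metric.closedBall (0 : Euc d) 1) := by
    rw [← MeasureTheory.Measure.addHaar_image_continuousLinearMap volume f]
    calc volume (f '' Metric.closedBall 0 1) ≤ volume (Metric.closedBall (0:Euc d) ‖f‖) :=
          measure_mono himg
      _ = ENNReal.ofReal (‖f‖ ^ d) * volume (Metric.closedBall (0 : Euc d) 1) := by
          rw [MeasureTheory.Measure.addHaar_closedBall' volume _ (norm_nonneg f)]
          congr 2
          rw [finrank_euclideanSpace_fin]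
  have h2 := (ENNReal.mul_le_mul_iff_left hB0.ne' hBt).mp h1
  rw [ENNReal.ofReal_le_ofReal_iff (by positivity)] at h2
  exact h2

lemma norm_symm_le (e : Euc d ≃L[ℝ] Euc d) (h : 0 < conorm (e : Euc d →L[ℝ] Euc d)) :
    ‖(e.symm : Euc d →L[ℝ] Euc d)‖ ≤ (conorm (e : Euc d →L[ℝ] Euc d))⁻¹ := by
  apply ContinuousLinearMap.opNorm_le_bound _ (by positivity)
  intro w
  have h1 : conorm (e : Euc d →L[ℝ] Euc d) * ‖e.symm w‖ ≤ ‖e (e.symm w)‖ :=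
    conorm_mul_le (e : Euc d →L[ℝ] Euc d) (e.symm w)
  rw [e.apply_symm_apply] at h1
  have h2 : ((e.symm : Euc d →L[ℝ] Euc d) w) = e.symm w := rfl
  rw [h2, inv_mul_eq_div, le_div_iff₀ h]
  linarith [h1, mul_comm (conorm (e : Euc d →L[ℝ] Euc d)) ‖e.symm w‖]

lemma cdet_mul_symm (e : Euc d ≃L[ℝ] Euc d) : cdet e.symm * cdet e = 1 := by
  have hcomp : ((e.symm : Euc d →L[ℝ] Euc d) : Euc d →ₗ[ℝ] Euc d).comp
      ((e : Euc d →L[ℝ] Euc d) : Euc d →ₗ[ℝ] Euc d) = LinearMap.id := by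
    ext v
    simp
  have := congrArg LinearMap.det hcomp
  rwa [LinearMap.det_comp, LinearMap.det_id] at this

lemma conorm_pow_le_abs_cdet (hd : 1 ≤ d) (e : Euc d ≃L[ℝ] Euc d)
    (h : 0 < conorm (e : Euc d →L[ℝ] Euc d)) :
    conorm (e : Euc d →L[ℝ] Euc d) ^ d ≤ |cdet e| := by
  set m := conorm (e : Euc d →L[ℝ] Euc d)
  have h1 : |cdet e.symm| ≤ m⁻¹ ^ d := by
    calc |cdet e.symm| ≤ ‖(e.symm : Euc d →L[ℝ] Euc d)‖ ^ d := abs_det_le hd _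
      _ ≤ m⁻¹ ^ d := pow_le_pow_left₀ (norm_nonneg _) (norm_symm_le e h) d
  have h2 : |cdet e.symm| * |cdet e| = 1 := by
    rw [← abs_mul, cdet_mul_symm]; norm_num
  have h3 : 0 < |cdet e.symm| := by
    by_contra hc
    push_neg at hc
    have : |cdet e.symm| = 0 := le_antisymm hc (abs_nonneg _)
    rw [this, zero_mul] at h2; norm_num at h2
  have h4 : |cdet e| = |cdet e.symm|⁻¹ := by field_simp; linarith [h2]
  rw [h4]
  have h5 : (0:ℝ) < m⁻¹ ^ d := by positivity
  calc m ^ d = ((m⁻¹)⁻¹) ^ d := by rw [inv_inv]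
    _ = ((m⁻¹) ^ d)⁻¹ := by rw [inv_pow]
    _ ≤ |cdet e.symm|⁻¹ := by
        apply inv_anti₀ h3 h1

set_option maxHeartbeats 400000 in
/-- Key Lemma: Given `C > 0`, `κ ≥ 1 > λ̄ > λ̲ > 0`, `α ∈ (0,1)`, there exist
`ξ₁, γ > 0` such that for any `n`, any sequence `{D_i}` in `GL(d,ℝ)` satisfying the
contraction condition (C1) and the quasi-conformality condition (C2), and any sequence
`{y_i}` with `|y_0| ≤ ξ₁` and `|y_{i+1} − D_{i+1} y_i| < C|y_i|^(1+α)`, one has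
`|y_n − D_n⋯D_1 y_0| < γ |det(D_n⋯D_1)|^(1/d) |y_0|^(1+α)`. -/
theorem stmt7 (d : ℕ) (hd : 1 ≤ d) (C κ lamL lamU α : ℝ)
    (hC : 0 < C) (hκ : 1 ≤ κ) (hlamU : lamU < 1) (hlam : lamL < lamU) (hlamL : 0 < lamL)
    (hα : α ∈ Set.Ioo (0 : ℝ) 1) :
    ∃ ξ₁ γ : ℝ, 0 < ξ₁ ∧ 0 < γ ∧
      ∀ (n : ℕ), 1 ≤ n → ∀ (D : ℕ → (Euc d ≃L[ℝ] Euc d)) (y : ℕ → Euc d),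
        (∀ i, 1 ≤ i → i ≤ n →
          lamL ≤ conorm (D i : Euc d →L[ℝ] Euc d) ∧
            ‖(D i : Euc d →L[ℝ] Euc d)‖ ≤ lamU) →
        (∀ i, 1 ≤ i → i ≤ n →
          ‖(blockProd D 0 i : Euc d →L[ℝ] Euc d)‖ ≤
            κ * conorm (blockProd D 0 i : Euc d →L[ℝ] Euc d)) →
        ‖y 0‖ ≤ ξ₁ →
        (∀ i, i + 1 ≤ n → ‖y (i + 1) - D (i + 1) (y i)‖ < C * ‖y i‖ ^ (1 + α)) →
        ‖y n - (blockProd D 0 n) (y 0)‖ <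
          γ * |cdet (blockProd D 0 n)| ^ ((1 : ℝ) / d) * ‖y 0‖ ^ (1 + α) := by
  obtain ⟨hα0, hα1⟩ := hα
  have hlamU0 : (0:ℝ) < lamU := hlamL.trans hlam
  set β : ℝ := lamU ^ α with hβdef
  have hβ0 : 0 < β := Real.rpow_pos_of_pos hlamU0 α
  have hβ1 : β < 1 := Real.rpow_lt_one hlamU0.le hlamU hα0
  set S : ℝ := (1 - β)⁻¹ with hSdef
  have hS0 : 0 < S := inv_pos.2 (by linarith)
  have hSβ : S * (1 - β) = 1 := inv_mul_cancel₀ (by linarith)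
  set A : ℝ := C * (2*κ) ^ (1+α) / lamL with hAdef
  have h2κ : (0:ℝ) < 2*κ := by linarith
  have hA0 : 0 < A := div_pos (mul_pos hC (Real.rpow_pos_of_pos h2κ _)) hlamL
  have hAS0 : 0 < A * S := mul_pos hA0 hS0
  have hκ0 : (0:ℝ) < κ := by linarith
  refine ⟨((A*S)⁻¹) ^ (α⁻¹ : ℝ), κ * (A * S) + 1,
    Real.rpow_pos_of_pos (inv_pos.2 hAS0) _,
    by have := mul_pos hκ0 hAS0; linarith, ?_⟩
  intro n hn D y hD hQ hy0 hy
  have hξα : (((A*S)⁻¹) ^ (α⁻¹ : ℝ)) ^ α = (A*S)⁻¹ := by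
    rw [← Real.rpow_mul (inv_nonneg.2 hAS0.le), inv_mul_cancel₀ hα0.ne', Real.rpow_one]
  -- y 0 ≠ 0
  have hy0pos : 0 < ‖y 0‖ := by
    rcases (norm_nonneg (y 0)).lt_or_eq with h | h
    · exact h
    · exfalso
      have h0 : y 0 = 0 := norm_eq_zero.1 h.symm
      have := hy 0 (by omega)
      rw [h0, norm_zero, Real.zero_rpow (by linarith), mul_zero] at this
      exact absurd this (not_lt.2 (norm_nonneg _))
  set Y : ℝ := ‖y 0‖ ^ (1+α) with hYdef
  have hYpos : 0 < Y := Real.rpow_pos_of_pos hy0pos _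
  set P : ℕ → (Euc d ≃L[ℝ] Euc d) := blockProd D 0 with hPdef
  have hPsucc : ∀ i, P (i+1) = (P i).trans (D (i+1)) := by
    intro i
    show blockProd D 0 (i+1) = _
    rw [blockProd]
    congr 2
    omega
  set m : ℕ → ℝ := fun i => conorm (P i : Euc d →L[ℝ] Euc d) with hmdef
  have hm0 : m 0 = 1 := conorm_refl hd
  have hmnn : ∀ i, 0 ≤ m i := fun i => conorm_nonneg _
  have hstep : ∀ i, i < n → lamL * m i ≤ m (i+1) := by
    intro i hi
    have h1 := conorm_trans hd (P i) (D (i+1))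
    have h2 := (hD (i+1) (by omega) (by omega)).1
    rw [← hPsucc i] at h1
    calc lamL * m i = m i * lamL := mul_comm _ _
      _ ≤ m i * conorm ((D (i+1) : Euc d →L[ℝ] Euc d)) := by
          exact mul_le_mul_of_nonneg_left h2 (hmnn i)
      _ ≤ m (i+1) := h1
  have hmpos : ∀ i, i ≤ n → 0 < m i := by
    intro i hi
    induction i with
    | zero => rw [hm0]; norm_num
    | succ k ih =>
        have hk := ih (by omega)
        calc (0:ℝ) < lamL * m k := mul_pos hlamL hk
          _ ≤ m (k+1) := hstep k (by omega)
  have hnormP : ∀ i, i ≤ n → ‖(P i : Euc d →L[ℝ] Euc d)‖ ≤ lamU ^ i := by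
    intro i hi
    induction i with
    | zero =>
        show ‖((ContinuousLinearEquiv.refl ℝ (Euc d) : Euc d ≃L[ℝ] Euc d) :
          Euc d →L[ℝ] Euc d)‖ ≤ 1
        rw [ContinuousLinearEquiv.coe_refl]
        exact ContinuousLinearMap.norm_id_le
    | succ k ih =>
        have hk := ih (by omega)
        rw [hPsucc k, ← ContinuousLinearEquiv.comp_coe]
        calc ‖((D (k+1) : Euc d →L[ℝ] Euc d)).comp (P k : Euc d →L[ℝ] Euc d)‖
            ≤ ‖(D (k+1) : Euc d →L[ℝ] Euc d)‖ * ‖(P k : Euc d →L[ℝ] Euc d)‖ :=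
              ContinuousLinearMap.opNorm_comp_le _ _
          _ ≤ lamU * lamU ^ k := by
              apply mul_le_mul (hD (k+1) (by omega) (by omega)).2 hk (norm_nonneg _) hlamU0.le
          _ = lamU ^ (k+1) := (pow_succ' lamU k).symm
  have hmle : ∀ i, i ≤ n → m i ≤ lamU ^ i := fun i hi =>
    (conorm_le_norm hd _).trans (hnormP i hi)
  -- the sequences e and z
  set e : ℕ → Euc d := fun i => y i - (P i) (y 0) with hedef
  set z : ℕ → Euc d := fun i => (P i).symm (e i) with hzdef
  have hez : ∀ i, e i = (P i) (z i) := fun i => ((P i).apply_symm_apply (e i)).symm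
  have hz0 : z 0 = 0 := by
    have : e 0 = 0 := by
      show y 0 - (ContinuousLinearEquiv.refl ℝ (Euc d)) (y 0) = 0
      simp
    simp [hzdef, this]
  have hzrec : ∀ i, z (i+1) = (P (i+1)).symm (y (i+1) - D (i+1) (y i)) + z i := by
    intro i
    apply (P (i+1)).injective
    rw [map_add, ContinuousLinearEquiv.apply_symm_apply,
      ContinuousLinearEquiv.apply_symm_apply]
    show e (i+1) = (y (i+1) - D (i+1) (y i)) + (P (i+1)) (z i)
    have h1 : (P (i+1)) (z i) = D (i+1) ((P i) (z i)) := by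
      rw [hPsucc i]; rfl
    rw [h1, ← hez i]
    show y (i+1) - (P (i+1)) (y 0) = _
    have h2 : (P (i+1)) (y 0) = D (i+1) ((P i) (y 0)) := by
      rw [hPsucc i]; rfl
    rw [h2]
    have h3 : D (i+1) (y i - (P i) (y 0)) = D (i+1) (y i) - D (i+1) ((P i) (y 0)) :=
      map_sub _ _ _
    rw [h3]
    abel
  -- bound on ‖y i‖ given the inductive bound on ‖z i‖
  have hAY : A * S * Y ≤ ‖y 0‖ := by
    have h1 : ‖y 0‖ ^ α ≤ (((A*S)⁻¹) ^ (α⁻¹ : ℝ)) ^ α :=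
      Real.rpow_le_rpow (norm_nonneg _) hy0 hα0.le
    rw [hξα] at h1
    have h2 : Y = ‖y 0‖ * ‖y 0‖ ^ α := by
      rw [hYdef, Real.rpow_add hy0pos, Real.rpow_one]
    rw [h2]
    calc A * S * (‖y 0‖ * ‖y 0‖ ^ α) = (A*S * ‖y 0‖ ^ α) * ‖y 0‖ := by ring
      _ ≤ (A*S * (A*S)⁻¹) * ‖y 0‖ := by
          apply mul_le_mul_of_nonneg_right _ hy0pos.le
          exact mul_le_mul_of_nonneg_left h1 hAS0.le
      _ = ‖y 0‖ := by rw [mul_inv_cancel₀ hAS0.ne']; ring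
  have hyb : ∀ i, i ≤ n → ‖z i‖ ≤ A * S * (1 - β^i) * Y → ‖y i‖ ≤ 2*κ*(m i)*‖y 0‖ := by
    intro i hi hzb
    rcases Nat.eq_zero_or_pos i with rfl | hi1
    · rw [hm0]
      nlinarith [mul_le_mul_of_nonneg_right (show (1:ℝ) ≤ 2*κ by linarith) hy0pos.le]
    · have hPκ : ‖(P i : Euc d →L[ℝ] Euc d)‖ ≤ κ * m i := hQ i hi1 hi
      have hyi : y i = e i + (P i) (y 0) := by simp [hedef]
      have hprod : 0 ≤ A * S * β^i * Y :=
        mul_nonneg (mul_nonneg hAS0.le (pow_nonneg hβ0.le i)) hYpos.le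
      have hbz : ‖z i‖ ≤ A * S * Y := by
        calc ‖z i‖ ≤ A * S * (1 - β^i) * Y := hzb
          _ = A * S * Y - A * S * β^i * Y := by ring
          _ ≤ A * S * Y := by linarith
      calc ‖y i‖ = ‖e i + (P i) (y 0)‖ := by rw [← hyi]
        _ ≤ ‖e i‖ + ‖(P i) (y 0)‖ := norm_add_le _ _
        _ ≤ ‖(P i : Euc d →L[ℝ] Euc d)‖ * ‖z i‖ +
            ‖(P i : Euc d →L[ℝ] Euc d)‖ * ‖y 0‖ := by
            apply add_le_add
            · rw [hez i]; exact ((P i : Euc d →L[ℝ] Euc d)).le_opNorm (z i)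
            · exact ((P i : Euc d →L[ℝ] Euc d)).le_opNorm (y 0)
        _ ≤ (κ * m i) * (A * S * Y) + (κ * m i) * ‖y 0‖ := by
            apply add_le_add
            · exact mul_le_mul hPκ hbz (norm_nonneg _)
                (mul_nonneg hκ0.le (hmnn i))
            · exact mul_le_mul_of_nonneg_right hPκ (norm_nonneg _)
        _ ≤ (κ * m i) * ‖y 0‖ + (κ * m i) * ‖y 0‖ := by
            apply add_le_add_left
            apply mul_le_mul_of_nonneg_left hAY (mul_nonneg hκ0.le (hmnn i))
        _ = 2*κ*(m i)*‖y 0‖ := by ring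
  -- main induction
  have key : ∀ i, i ≤ n → ‖z i‖ ≤ A * S * (1 - β^i) * Y := by
    intro i hi
    induction i with
    | zero => rw [hz0]; simp
    | succ k ih =>
        have hk : k ≤ n := by omega
        have ihk := ih hk
        have hyk : ‖y k‖ ≤ 2*κ*(m k)*‖y 0‖ := hyb k hk ihk
        have hmk : 0 < m k := hmpos k hk
        have hmk1 : 0 < m (k+1) := hmpos (k+1) hi
        have hε : ‖y (k+1) - D (k+1) (y k)‖ ≤ C * ‖y k‖ ^ (1+α) := (hy k hi).le
        -- bound ‖y k‖ ^ (1+α)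
        have hybp : ‖y k‖ ^ (1+α) ≤ (2*κ)^(1+α) * ((m k) * β^k) * Y := by
      
        
        
          have h1 : ‖y k‖ ^ (1+α) ≤ (2*κ*(m k)*‖y 0‖) ^ (1+α) :=
            Real.rpow_le_rpow (norm_nonneg _) hyk (by linarith)
          have h2 : (2*κ*(m k)*‖y 0‖ : ℝ) = (2*κ) * ((m k) * ‖y 0‖) := by ring
          have h3 : ((2*κ) * ((m k) * ‖y 0‖)) ^ (1+α)
              = (2*κ)^(1+α) * ((m k)^(1+α) * Y) := by
            rw [Real.mul_rpow h2κ.le (mul_nonneg (hmnn k) (norm_nonneg _)), Real.mul_rpow hmk.le (norm_nonneg _)]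
          have h4 : (m k)^(1+α) ≤ (m k) * β^k := by
            have h5 : (m k)^(1+α) = m k * (m k)^α := by
              rw [Real.rpow_add hmk, Real.rpow_one]
            have h6 : (m k)^α ≤ (lamU ^ k : ℝ)^α :=
              Real.rpow_le_rpow (hmnn k) (hmle k hk) hα0.le
            have h7 : ((lamU ^ k : ℝ) : ℝ)^α = β^k := by
              rw [← Real.rpow_natCast lamU k, ← Real.rpow_mul hlamU0.le,
                mul_comm, Real.rpow_mul hlamU0.le, Real.rpow_natCast]
            rw [h5]
            exact mul_le_mul_of_nonneg_left (h7 ▸ h6) hmk.le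
          calc ‖y k‖ ^ (1+α) ≤ ((2*κ) * ((m k) * ‖y 0‖)) ^ (1+α) := by rw [← h2]; exact h1
            _ = (2*κ)^(1+α) * ((m k)^(1+α) * Y) := h3
            _ ≤ (2*κ)^(1+α) * ((m k) * β^k * Y) := by
                apply mul_le_mul_of_nonneg_left _ (Real.rpow_pos_of_pos h2κ _).le
                exact mul_le_mul_of_nonneg_right h4 hYpos.le
            _ = (2*κ)^(1+α) * ((m k) * β^k) * Y := by ring
        -- bound the new increment
        have hincr : ‖(P (k+1)).symm (y (k+1) - D (k+1) (y k))‖ ≤ A * β^k * Y := by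
          have h1 : m (k+1) * ‖(P (k+1)).symm (y (k+1) - D (k+1) (y k))‖ ≤
              ‖y (k+1) - D (k+1) (y k)‖ := by
            have := conorm_mul_le (P (k+1) : Euc d →L[ℝ] Euc d)
              ((P (k+1)).symm (y (k+1) - D (k+1) (y k)))
            rwa [show (P (k+1) : Euc d →L[ℝ] Euc d) ((P (k+1)).symm _) = _ from
              (P (k+1)).apply_symm_apply _] at this
          have h2 : ‖(P (k+1)).symm (y (k+1) - D (k+1) (y k))‖ ≤
              C * ((2*κ)^(1+α) * ((m k) * β^k) * Y) / m (k+1) := by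
            rw [le_div_iff₀ hmk1]
            calc ‖(P (k+1)).symm (y (k+1) - D (k+1) (y k))‖ * m (k+1)
                = m (k+1) * ‖(P (k+1)).symm (y (k+1) - D (k+1) (y k))‖ := mul_comm _ _
              _ ≤ ‖y (k+1) - D (k+1) (y k)‖ := h1
              _ ≤ C * ‖y k‖ ^ (1+α) := hε
              _ ≤ C * ((2*κ)^(1+α) * ((m k) * β^k) * Y) :=
                  mul_le_mul_of_nonneg_left hybp hC.le
          refine h2.trans ?_
          rw [div_le_iff₀ hmk1]
          have hlm : lamL * m k ≤ m (k+1) := hstep k (by omega)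
          have hAdef' : A * lamL = C * (2*κ)^(1+α) := by
            rw [hAdef, div_mul_cancel₀ _ hlamL.ne']
          have e1 : C * ((2*κ)^(1+α) * ((m k) * β^k) * Y)
              = (A * β^k * Y) * (lamL * m k) := by
            linear_combination (-((m k) * β^k * Y)) * hAdef'
          rw [e1]
          exact mul_le_mul_of_nonneg_left hlm
            (mul_nonneg (mul_nonneg hA0.le (pow_nonneg hβ0.le k)) hYpos.le)
        calc ‖z (k+1)‖ = ‖(P (k+1)).symm (y (k+1) - D (k+1) (y k)) + z k‖ := by
              rw [hzrec k]
          _ ≤ ‖(P (k+1)).symm (y (k+1) - D (k+1) (y k))‖ + ‖z k‖ := norm_add_le _ _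
          _ ≤ A * β^k * Y + A * S * (1 - β^k) * Y := add_le_add hincr ihk
          _ = A * S * (1 - β^(k+1)) * Y := by
              linear_combination (-(A * Y * β^k)) * hSβ
  -- conclusion
  have hzn := key n le_rfl
  have hmn : 0 < m n := hmpos n le_rfl
  have hdet : (m n) ≤ |cdet (P n)| ^ ((1:ℝ)/d) := by
    have h1 : (m n) ^ d ≤ |cdet (P n)| := conorm_pow_le_abs_cdet hd (P n) hmn
    have h2 : ((m n) ^ d : ℝ) ^ ((1:ℝ)/d) ≤ |cdet (P n)| ^ ((1:ℝ)/d) :=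
      Real.rpow_le_rpow (pow_nonneg (hmnn n) d) h1 (by positivity)
    rwa [← Real.rpow_natCast (m n) d, ← Real.rpow_mul hmn.le,
      mul_one_div, div_self (by exact_mod_cast Nat.pos_of_ne_zero (by omega) |>.ne'),
      Real.rpow_one] at h2
  have hdetpos : 0 < |cdet (P n)| ^ ((1:ℝ)/d) := lt_of_lt_of_le hmn hdet
  have hPκn : ‖(P n : Euc d →L[ℝ] Euc d)‖ ≤ κ * m n := hQ n hn le_rfl
  have hfin : ‖y n - (P n) (y 0)‖ ≤ κ * (A * S) * ((m n) * Y) := by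
    have h1 : ‖y n - (P n) (y 0)‖ = ‖e n‖ := rfl
    rw [h1, hez n]
    have hbz : ‖z n‖ ≤ A * S * Y := by
      have hprod : 0 ≤ A * S * β^n * Y :=
        mul_nonneg (mul_nonneg hAS0.le (pow_nonneg hβ0.le n)) hYpos.le
      calc ‖z n‖ ≤ A * S * (1 - β^n) * Y := hzn
        _ = A * S * Y - A * S * β^n * Y := by ring
        _ ≤ A * S * Y := by linarith
    calc ‖(P n) (z n)‖ ≤ ‖(P n : Euc d →L[ℝ] Euc d)‖ * ‖z n‖ :=
          ((P n : Euc d →L[ℝ] Euc d)).le_opNorm (z n)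
      _ ≤ (κ * m n) * (A * S * Y) := by
          exact mul_le_mul hPκn hbz (norm_nonneg _) (mul_nonneg hκ0.le (hmnn n))
      _ = κ * (A * S) * ((m n) * Y) := by ring
  calc ‖y n - (P n) (y 0)‖ ≤ κ * (A * S) * ((m n) * Y) := hfin
    _ ≤ κ * (A * S) * (|cdet (P n)| ^ ((1:ℝ)/d) * Y) := by
        apply mul_le_mul_of_nonneg_left _ (mul_nonneg hκ0.le hAS0.le)
        exact mul_le_mul_of_nonneg_right hdet hYpos.le
    _ < (κ * (A * S) + 1) * (|cdet (P n)| ^ ((1:ℝ)/d) * Y) := by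
        have : (0:ℝ) < |cdet (P n)| ^ ((1:ℝ)/d) * Y := mul_pos hdetpos hYpos
        nlinarith
    _ = (κ * (A * S) + 1) * |cdet (P n)| ^ ((1:ℝ)/d) * Y := by ring
end
end

section
/- Let C > 0, 0 < λ̄ < 1. Suppose {h_j}ⱼ₌₁^n are C² (i.e. C^{1+Lip}) diffeomorphisms on B(0,R) ⊂ ℝ^d fixing 0, with Lipschitz constant C for their derivatives, ‖D_y h_j‖ ≤ λ̄ for all y, and such that each partial composition at 0 has κ-conformal derivative. Then there exists C₁ > 0 (depending only on d, R, C, κ, λ̄, λ̲) such that for all n ≥ 1 and all x ∈ B(0,R) with λ̲ ≤ m(D_yh_j), one has ‖D_x h^n‖ ≤ C₁|det D_0 h^n|^(1/d). -/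
noncomputable section

/-- An invertible linear map `D` of `ℝ^d` is `κ`-conformal if `‖D‖ · ‖D⁻¹‖ ≤ κ`. -/
def IsConformal {d : ℕ} (κ : ℝ) (D : Euc d ≃L[ℝ] Euc d) : Prop :=
  ‖(D : Euc d →L[ℝ] Euc d)‖ * ‖(D.symm : Euc d →L[ℝ] Euc d)‖ ≤ κ

/-- `compSeq h n = h_n ∘ ⋯ ∘ h_1`. -/
def compSeq {d : ℕ} (h : ℕ → Euc d → Euc d) : ℕ → Euc d → Euc d
  | 0 => id
  | k + 1 => h (k + 1) ∘ compSeq h k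


open MeasureTheory Metric Finset in
lemma abs_det_le_norm_pow {d : ℕ} (hd : 1 ≤ d) (T : Euc d →L[ℝ] Euc d) :
    |LinearMap.det (T.toLinearMap)| ≤ ‖T‖ ^ d := by
  have hfin : Module.finrank ℝ (Euc d) = d := finrank_euclideanSpace_fin
  have h0 : (volume (ball (0:Euc d) 1)) ≠ 0 :=
    (measure_ball_pos volume 0 one_pos).ne'
  have htop : (volume (ball (0:Euc d) 1)) ≠ ⊤ := measure_ball_lt_top.ne
  have himg : volume (⇑T '' ball (0:Euc d) 1)
      = ENNReal.ofReal |LinearMap.det (T.toLinearMap)| * volume (ball (0:Euc d) 1) := by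
    simpa using Measure.addHaar_image_continuousLinearMap volume T (ball 0 1)
  have hsub : ⇑T '' ball (0:Euc d) 1 ⊆ closedBall 0 ‖T‖ := by
    rintro y ⟨v, hv, rfl⟩
    simp only [mem_closedBall, dist_zero_right]
    calc ‖T v‖ ≤ ‖T‖ * ‖v‖ := T.le_opNorm v
    _ ≤ ‖T‖ * 1 := by
        have := mem_ball_zero_iff.mp hv
        exact mul_le_mul_of_nonneg_left this.le (norm_nonneg T)
    _ = ‖T‖ := mul_one _
  have hcb : volume (closedBall (0:Euc d) ‖T‖)
      = ENNReal.ofReal (‖T‖ ^ d) * volume (ball (0:Euc d) 1) := by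
    rw [Measure.addHaar_closedBall volume 0 (norm_nonneg T), hfin]
  have hmono : volume (⇑T '' ball (0:Euc d) 1) ≤ volume (closedBall (0:Euc d) ‖T‖) :=
    measure_mono hsub
  rw [himg, hcb] at hmono
  have hle := (ENNReal.mul_le_mul_iff_left h0 htop).mp hmono
  rwa [ENNReal.ofReal_le_ofReal_iff (by positivity)] at hle

lemma conorm_bound {d : ℕ} {T : Euc d →L[ℝ] Euc d} {c : ℝ}
    (h : c ≤ conorm T) (v : Euc d) : c * ‖v‖ ≤ ‖T v‖ := by
  rcases eq_or_ne v 0 with rfl | hv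
  · simp
  · have hvn : ‖v‖ ≠ 0 := norm_ne_zero_iff.mpr hv
    set u : Euc d := ‖v‖⁻¹ • v with hu
    have hun : ‖u‖ = 1 := by
      rw [hu, norm_smul, norm_inv, norm_norm, inv_mul_cancel₀ hvn]
    have hmem : ‖T u‖ ∈ (fun v => ‖T v‖) '' {v : Euc d | ‖v‖ = 1} :=
      ⟨u, hun, rfl⟩
    have hbdd : BddBelow ((fun v => ‖T v‖) '' {v : Euc d | ‖v‖ = 1}) :=
      ⟨0, fun x ⟨w, _, hw⟩ => hw ▸ norm_nonneg _⟩
    have h1 : c ≤ ‖T u‖ := le_trans h (csInf_le hbdd hmem)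
    have h2 : ‖T v‖ = ‖v‖ * ‖T u‖ := by
      rw [hu, T.map_smul, norm_smul, norm_inv, norm_norm]
      field_simp
    rw [h2, mul_comm c ‖v‖]
    exact mul_le_mul_of_nonneg_left h1 (norm_nonneg v)

lemma symm_norm_le {d : ℕ} {D : Euc d ≃L[ℝ] Euc d} {c : ℝ} (hc : 0 < c)
    (h : c ≤ conorm (D : Euc d →L[ℝ] Euc d)) :
    ‖(D.symm : Euc d →L[ℝ] Euc d)‖ ≤ c⁻¹ := by
  apply ContinuousLinearMap.opNorm_le_bound _ (by positivity)
  intro w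
  have h2 := conorm_bound h (D.symm w)
  rw [ContinuousLinearEquiv.coe_coe, D.apply_symm_apply] at h2
  rw [inv_mul_eq_div, le_div_iff₀ hc, mul_comm]
  exact h2

lemma cdet_trans {d : ℕ} (e f : Euc d ≃L[ℝ] Euc d) :
    cdet (e.trans f) = cdet e * cdet f := by
  unfold cdet
  have h : (((e.trans f) : Euc d →L[ℝ] Euc d).toLinearMap)
      = ((f : Euc d →L[ℝ] Euc d).toLinearMap) ∘ₗ ((e : Euc d →L[ℝ] Euc d).toLinearMap) := rfl
  rw [h, LinearMap.det_comp, mul_comm]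

lemma cdet_mul_cdet_symm {d : ℕ} (e : Euc d ≃L[ℝ] Euc d) :
    cdet e * cdet e.symm = 1 := by
  unfold cdet
  rw [← LinearMap.det_comp]
  have h : ((e : Euc d →L[ℝ] Euc d).toLinearMap) ∘ₗ ((e.symm : Euc d →L[ℝ] Euc d).toLinearMap)
      = LinearMap.id := by
    ext v; simp
  rw [h, LinearMap.det_id]

lemma cdet_ne_zero {d : ℕ} (e : Euc d ≃L[ℝ] Euc d) : cdet e ≠ 0 :=
  left_ne_zero_of_mul_eq_one (cdet_mul_cdet_symm e)

lemma abs_cdet_symm {d : ℕ} (e : Euc d ≃L[ℝ] Euc d) :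
    |cdet e.symm| = |cdet e|⁻¹ := by
  have h := cdet_mul_cdet_symm e
  have h2 : cdet e.symm = (cdet e)⁻¹ :=
    eq_inv_of_mul_eq_one_left (by rw [mul_comm]; exact h)
  rw [h2, abs_inv]

lemma rpow_one_div_pow {d : ℕ} (hd : 1 ≤ d) {x : ℝ} (hx : 0 ≤ x) :
    ((x ^ d : ℝ)) ^ ((1:ℝ)/d) = x := by
  have hd0 : (d:ℝ) ≠ 0 := Nat.cast_ne_zero.mpr (by omega)
  rw [← Real.rpow_natCast x d, ← Real.rpow_mul hx]
  field_simp
  simp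

lemma le_rpow_one_div {d : ℕ} (hd : 1 ≤ d) {x y : ℝ} (hx : 0 ≤ x)
    (h : x ^ d ≤ y) : x ≤ y ^ ((1:ℝ)/d) := by
  rw [← rpow_one_div_pow hd hx]
  exact Real.rpow_le_rpow (by positivity) h (by positivity)

lemma rpow_one_div_le {d : ℕ} (hd : 1 ≤ d) {x y : ℝ} (hx : 0 ≤ x)
    (h : x ≤ y ^ d) (hy : 0 ≤ y) : x ^ ((1:ℝ)/d) ≤ y := by
  rw [← rpow_one_div_pow hd hy]
  exact Real.rpow_le_rpow hx h (by positivity)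

lemma conformal_bounds {d : ℕ} (hd : 1 ≤ d) {κ : ℝ}
    {e : Euc d ≃L[ℝ] Euc d} (he : IsConformal κ e) :
    ‖(e : Euc d →L[ℝ] Euc d)‖ ≤ κ * |cdet e| ^ ((1:ℝ)/d) ∧
    ‖(e.symm : Euc d →L[ℝ] Euc d)‖ * |cdet e| ^ ((1:ℝ)/d) ≤ κ := by
  have hD : 0 < |cdet e| := abs_pos.mpr (cdet_ne_zero e)
  have hP : 0 < |cdet e| ^ ((1:ℝ)/d) := Real.rpow_pos_of_pos hD _
  have h1 : |cdet e| ≤ ‖(e : Euc d →L[ℝ] Euc d)‖ ^ d := abs_det_le_norm_pow hd _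
  have hPa : |cdet e| ^ ((1:ℝ)/d) ≤ ‖(e : Euc d →L[ℝ] Euc d)‖ :=
    rpow_one_div_le hd hD.le h1 (norm_nonneg _)
  have h2 : |cdet e|⁻¹ ≤ ‖(e.symm : Euc d →L[ℝ] Euc d)‖ ^ d := by
    have h3 := abs_det_le_norm_pow hd (e.symm : Euc d →L[ℝ] Euc d)
    rwa [show |LinearMap.det ((e.symm : Euc d →L[ℝ] Euc d).toLinearMap)| = |cdet e.symm| from rfl,
      abs_cdet_symm] at h3
  have hPb : (|cdet e| ^ ((1:ℝ)/d))⁻¹ ≤ ‖(e.symm : Euc d →L[ℝ] Euc d)‖ := by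
    have h4 : (|cdet e|⁻¹) ^ ((1:ℝ)/d) ≤ ‖(e.symm : Euc d →L[ℝ] Euc d)‖ :=
      rpow_one_div_le hd (by positivity) h2 (norm_nonneg _)
    rwa [Real.inv_rpow hD.le] at h4
  have hab : ‖(e : Euc d →L[ℝ] Euc d)‖ * ‖(e.symm : Euc d →L[ℝ] Euc d)‖ ≤ κ := he
  constructor
  · have h3 : ‖(e : Euc d →L[ℝ] Euc d)‖ * (|cdet e| ^ ((1:ℝ)/d))⁻¹ ≤ κ :=
      le_trans (mul_le_mul_of_nonneg_left hPb (norm_nonneg _)) hab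
    calc ‖(e : Euc d →L[ℝ] Euc d)‖
        = (‖(e : Euc d →L[ℝ] Euc d)‖ * (|cdet e| ^ ((1:ℝ)/d))⁻¹) * (|cdet e| ^ ((1:ℝ)/d)) := by
          rw [mul_assoc, inv_mul_cancel₀ hP.ne', mul_one]
    _ ≤ κ * (|cdet e| ^ ((1:ℝ)/d)) := mul_le_mul_of_nonneg_right h3 hP.le
  · calc ‖(e.symm : Euc d →L[ℝ] Euc d)‖ * |cdet e| ^ ((1:ℝ)/d)
        ≤ ‖(e.symm : Euc d →L[ℝ] Euc d)‖ * ‖(e : Euc d →L[ℝ] Euc d)‖ :=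
          mul_le_mul_of_nonneg_left hPa (norm_nonneg _)
    _ ≤ κ := by rw [mul_comm]; exact hab

lemma blockProd_succ_coe {d : ℕ} (D : ℕ → (Euc d ≃L[ℝ] Euc d)) (k : ℕ) :
    ((blockProd D 0 (k+1) : Euc d ≃L[ℝ] Euc d) : Euc d →L[ℝ] Euc d)
      = (D (k+1) : Euc d →L[ℝ] Euc d) * ((blockProd D 0 k : Euc d ≃L[ℝ] Euc d) : Euc d →L[ℝ] Euc d) := by
  show ((blockProd D 0 k).trans (D (0+k+1)) : Euc d →L[ℝ] Euc d) = _
  rw [Nat.zero_add]; rfl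

lemma telescope {d : ℕ} (Dt Do : ℕ → (Euc d ≃L[ℝ] Euc d)) (n : ℕ) :
    ((blockProd Dt 0 n : Euc d ≃L[ℝ] Euc d) : Euc d →L[ℝ] Euc d)
      = ((blockProd Do 0 n : Euc d ≃L[ℝ] Euc d) : Euc d →L[ℝ] Euc d)
        + ∑ i ∈ Finset.range n,
          (((blockProd Do 0 n : Euc d ≃L[ℝ] Euc d) : Euc d →L[ℝ] Euc d)
              * (((blockProd Do 0 (i+1)).symm : Euc d ≃L[ℝ] Euc d) : Euc d →L[ℝ] Euc d))
            * (((Dt (i+1) : Euc d →L[ℝ] Euc d) - (Do (i+1) : Euc d →L[ℝ] Euc d))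
              * ((blockProd Dt 0 i : Euc d ≃L[ℝ] Euc d) : Euc d →L[ℝ] Euc d)) := by
  induction n with
  | zero => simp [blockProd]
  | succ n IH =>
    have hAt := blockProd_succ_coe Dt n
    have hAo := blockProd_succ_coe Do n
    have hid : ((blockProd Do 0 (n+1) : Euc d ≃L[ℝ] Euc d) : Euc d →L[ℝ] Euc d)
        * (((blockProd Do 0 (n+1)).symm : Euc d ≃L[ℝ] Euc d) : Euc d →L[ℝ] Euc d) = 1 :=
      (blockProd Do 0 (n+1)).coe_comp_coe_symm
    rw [Finset.sum_range_succ, hAt]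
    rw [show (Dt (n+1) : Euc d →L[ℝ] Euc d)
          * ((blockProd Dt 0 n : Euc d ≃L[ℝ] Euc d) : Euc d →L[ℝ] Euc d)
        = (Do (n+1) : Euc d →L[ℝ] Euc d)
            * ((blockProd Dt 0 n : Euc d ≃L[ℝ] Euc d) : Euc d →L[ℝ] Euc d)
          + ((Dt (n+1) : Euc d →L[ℝ] Euc d) - (Do (n+1) : Euc d →L[ℝ] Euc d))
            * ((blockProd Dt 0 n : Euc d ≃L[ℝ] Euc d) : Euc d →L[ℝ] Euc d) from by
      rw [sub_mul]; abel]
    nth_rewrite 1 [IH]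
    rw [hid, one_mul, hAo, mul_add, Finset.mul_sum]
    simp only [mul_assoc]
    abel

lemma geom_sum_le_inv {r : ℝ} (h0 : 0 ≤ r) (h1 : r < 1) (m : ℕ) :
    ∑ i ∈ Finset.range m, r ^ i ≤ (1 - r)⁻¹ := by
  have hr : 0 < 1 - r := by linarith
  have h := geom_sum_mul r m
  have hm : 0 ≤ r ^ m := pow_nonneg h0 m
  rw [inv_eq_one_div, le_div_iff₀ hr]
  nlinarith [h]

set_option maxHeartbeats 1000000

/-- For `C^{1+Lip}` diffeomorphisms `h_j` of `B(0,R) ⊂ ℝ^d` fixing `0`, with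
derivatives Lipschitz with constant `C`, `λ̲ ≤ m(D_y h_j)`, `‖D_y h_j‖ ≤ λ̄ < 1`, and
`κ`-conformal derivatives of the partial compositions at `0`, there is `C₁ > 0`
(uniform in the sequence) with `‖D_x h^n‖ ≤ C₁ |det D_0 h^n|^(1/d)` for all `n ≥ 1` and
`x ∈ B(0,R)`. Here `D_x h^n` is the product of the derivatives along the orbit of `x`. -/
theorem stmt10 (d : ℕ) (hd : 1 ≤ d) (R C κ lamL lamU : ℝ)
    (hR : 0 < R) (hC : 0 < C) (hκ : 1 ≤ κ) (hlamL : 0 < lamL) (hlam : lamL < lamU)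
    (hlamU : lamU < 1) :
    ∃ C₁ : ℝ, 0 < C₁ ∧
      ∀ (n : ℕ), 1 ≤ n → ∀ (h : ℕ → Euc d → Euc d) (Dh : ℕ → Euc d → (Euc d ≃L[ℝ] Euc d)),
        (∀ j, 1 ≤ j → j ≤ n → h j 0 = 0) →
        (∀ j, 1 ≤ j → j ≤ n → ∀ y ∈ Metric.ball (0 : Euc d) R,
          HasFDerivAt (h j) (Dh j y : Euc d →L[ℝ] Euc d) y) →
        (∀ j, 1 ≤ j → j ≤ n → ∀ y ∈ Metric.ball (0 : Euc d) R,
          ∀ y' ∈ Metric.ball (0 : Euc d) R,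
            ‖(Dh j y : Euc d →L[ℝ] Euc d) - (Dh j y' : Euc d →L[ℝ] Euc d)‖ ≤
              C * ‖y - y'‖) →
        (∀ j, 1 ≤ j → j ≤ n → ∀ y ∈ Metric.ball (0 : Euc d) R,
          lamL ≤ conorm (Dh j y : Euc d →L[ℝ] Euc d) ∧
            ‖(Dh j y : Euc d →L[ℝ] Euc d)‖ ≤ lamU) →
        (∀ k, 1 ≤ k → k ≤ n → IsConformal κ (blockProd (fun j => Dh j 0) 0 k)) →
        ∀ x ∈ Metric.ball (0 : Euc d) R,
          ‖(blockProd (fun j => Dh j (compSeq h (j - 1) x)) 0 n : Euc d →L[ℝ] Euc d)‖ ≤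
            C₁ * |cdet (blockProd (fun j => Dh j 0) 0 n)| ^ ((1 : ℝ) / d) := by
  classical
  have hU0 : 0 < lamU := lt_trans hlamL hlam
  have hU1 : 0 < 1 - lamU := by linarith
  have hκ0 : 0 < κ := lt_of_lt_of_le one_pos hκ
  set α : ℝ := κ^2 * C * R / lamL with hαdef
  have hα0 : 0 < α := by positivity
  set M : ℝ := 2 * max α 1 with hMdef
  have hM0 : 0 < M := by positivity
  have hMα : α ≤ M / 2 := by
    rw [hMdef]; rw [mul_comm, mul_div_assoc]; simp [le_max_left]
  obtain ⟨N, hN⟩ : ∃ N : ℕ, lamU ^ N < (1 - lamU) / M :=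
    exists_pow_lt_of_lt_one (by positivity) hlamU
  set Q : ℝ := (max 1 (lamU^2 / lamL)) ^ N with hQdef
  have hQ1 : (1:ℝ) ≤ Q := one_le_pow₀ (le_max_left _ _)
  set β : ℝ := α * N * Q + 1 with hβdef
  have hβ0 : 0 < β := by positivity
  set C₁ : ℝ := 2 * (κ + β) with hC₁def
  have hC₁2 : (2:ℝ) ≤ C₁ := by nlinarith
  have hC₁0 : 0 < C₁ := by linarith
  refine ⟨C₁, hC₁0, ?_⟩
  intro n hn h Dh hfix hderiv hlip hbound hconf x hx
  set Do : ℕ → Euc d ≃L[ℝ] Euc d := fun j => Dh j 0 with hDodef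
  set Dt : ℕ → Euc d ≃L[ℝ] Euc d := fun j => Dh j (compSeq h (j-1) x) with hDtdef
  have hx' : ‖x‖ < R := mem_ball_zero_iff.mp hx
  -- orbit bounds
  have horb : ∀ i, i ≤ n → ‖compSeq h i x‖ ≤ lamU ^ i * ‖x‖ := by
    intro i
    induction i with
    | zero => intro _; simp [compSeq]
    | succ i IH =>
      intro hin
      have hi : i ≤ n := by omega
      have hxi := IH hi
      have hball : compSeq h i x ∈ Metric.ball (0:Euc d) R := by
        rw [mem_ball_zero_iff]
        calc ‖compSeq h i x‖ ≤ lamU ^ i * ‖x‖ := hxi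
        _ ≤ 1 * ‖x‖ :=
            mul_le_mul_of_nonneg_right (pow_le_one₀ hU0.le hlamU.le) (norm_nonneg _)
        _ < R := by rwa [one_mul]
      have h0ball : (0:Euc d) ∈ Metric.ball (0:Euc d) R := Metric.mem_ball_self hR
      have hmvt : ‖h (i+1) (compSeq h i x) - h (i+1) 0‖ ≤ lamU * ‖compSeq h i x - 0‖ :=
        Convex.norm_image_sub_le_of_norm_hasFDerivWithin_le
          (f' := fun y => (Dh (i+1) y : Euc d →L[ℝ] Euc d))
          (fun y hy => (hderiv (i+1) (by omega) hin y hy).hasFDerivWithinAt)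
          (fun y hy => (hbound (i+1) (by omega) hin y hy).2)
          (convex_ball _ _) h0ball hball
      rw [hfix (i+1) (by omega) hin, sub_zero, sub_zero] at hmvt
      calc ‖compSeq h (i+1) x‖ = ‖h (i+1) (compSeq h i x)‖ := rfl
      _ ≤ lamU * ‖compSeq h i x‖ := hmvt
      _ ≤ lamU * (lamU ^ i * ‖x‖) := mul_le_mul_of_nonneg_left hxi hU0.le
      _ = lamU ^ (i+1) * ‖x‖ := by ring
  have horbball : ∀ i, i ≤ n → compSeq h i x ∈ Metric.ball (0:Euc d) R := by
    intro i hi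
    rw [mem_ball_zero_iff]
    calc ‖compSeq h i x‖ ≤ lamU ^ i * ‖x‖ := horb i hi
    _ ≤ 1 * ‖x‖ :=
        mul_le_mul_of_nonneg_right (pow_le_one₀ hU0.le hlamU.le) (norm_nonneg _)
    _ < R := by rwa [one_mul]
  -- difference of derivatives along the orbit and at 0
  have hdiff : ∀ i, i < n →
      ‖(Dt (i+1) : Euc d →L[ℝ] Euc d) - (Do (i+1) : Euc d →L[ℝ] Euc d)‖
        ≤ C * R * lamU ^ i := by
    intro i hi
    have h1 := hlip (i+1) (by omega) (by omega) (compSeq h i x) (horbball i (by omega))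
      0 (Metric.mem_ball_self hR)
    have h2 : Dt (i+1) = Dh (i+1) (compSeq h i x) := by
      rw [hDtdef]; simp
    have h3 : Do (i+1) = Dh (i+1) 0 := by rw [hDodef]
    rw [h2, h3]
    calc ‖(Dh (i+1) (compSeq h i x) : Euc d →L[ℝ] Euc d) - (Dh (i+1) 0 : Euc d →L[ℝ] Euc d)‖
        ≤ C * ‖compSeq h i x - 0‖ := h1
    _ = C * ‖compSeq h i x‖ := by rw [sub_zero]
    _ ≤ C * (lamU ^ i * ‖x‖) := mul_le_mul_of_nonneg_left (horb i (by omega)) hC.le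
    _ ≤ C * (lamU ^ i * R) := by
        have : lamU ^ i * ‖x‖ ≤ lamU ^ i * R :=
          mul_le_mul_of_nonneg_left hx'.le (by positivity)
        exact mul_le_mul_of_nonneg_left this hC.le
    _ = C * R * lamU ^ i := by ring
  -- trivial norm bound for orbit products
  have hAt_norm : ∀ k, k ≤ n →
      ‖((blockProd Dt 0 k : Euc d ≃L[ℝ] Euc d) : Euc d →L[ℝ] Euc d)‖ ≤ lamU ^ k := by
    intro k
    induction k with
    | zero =>
      intro _
      have hidc : ((blockProd Dt 0 0 : Euc d ≃L[ℝ] Euc d) : Euc d →L[ℝ] Euc d)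
          = ContinuousLinearMap.id ℝ (Euc d) := rfl
      rw [hidc, pow_zero]
      exact ContinuousLinearMap.norm_id_le
    | succ k IH =>
      intro hk
      have h2 : Dt (k+1) = Dh (k+1) (compSeq h k x) := by rw [hDtdef]; simp
      have hb := (hbound (k+1) (by omega) hk (compSeq h k x) (horbball k (by omega))).2
      rw [blockProd_succ_coe]
      calc ‖(Dt (k+1) : Euc d →L[ℝ] Euc d)
            * ((blockProd Dt 0 k : Euc d ≃L[ℝ] Euc d) : Euc d →L[ℝ] Euc d)‖
          ≤ ‖(Dt (k+1) : Euc d →L[ℝ] Euc d)‖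
            * ‖((blockProd Dt 0 k : Euc d ≃L[ℝ] Euc d) : Euc d →L[ℝ] Euc d)‖ :=
            norm_mul_le _ _
      _ ≤ lamU * lamU ^ k := by
          apply mul_le_mul (by rw [h2]; exact hb) (IH (by omega)) (norm_nonneg _) hU0.le
      _ = lamU ^ (k+1) := by ring
  -- determinant quantities
  set δ : ℕ → ℝ := fun j => |cdet (Do j)| ^ ((1:ℝ)/d) with hδdef
  set P : ℕ → ℝ := fun k => |cdet (blockProd Do 0 k)| ^ ((1:ℝ)/d) with hPdef
  have hPpos : ∀ k, 0 < P k := by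
    intro k
    rw [hPdef]
    exact Real.rpow_pos_of_pos (abs_pos.mpr (cdet_ne_zero _)) _
  have hδpos : ∀ j, 0 < δ j := by
    intro j
    rw [hδdef]
    exact Real.rpow_pos_of_pos (abs_pos.mpr (cdet_ne_zero _)) _
  have hδbound : ∀ j, 1 ≤ j → j ≤ n → lamL ≤ δ j ∧ δ j ≤ lamU := by
    intro j h1 h2
    have hb := hbound j h1 h2 0 (Metric.mem_ball_self hR)
    have hDnorm : ‖(Do j : Euc d →L[ℝ] Euc d)‖ ≤ lamU := hb.2
    have hsymm : ‖((Do j).symm : Euc d →L[ℝ] Euc d)‖ ≤ lamL⁻¹ := symm_norm_le hlamL hb.1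
    have hdetpos : 0 < |cdet (Do j)| := abs_pos.mpr (cdet_ne_zero _)
    rw [hδdef]
    constructor
    · apply le_rpow_one_div hd hlamL.le
      have h3 : |cdet ((Do j).symm)| ≤ lamL⁻¹ ^ d :=
        le_trans (abs_det_le_norm_pow hd _) (pow_le_pow_left₀ (norm_nonneg _) hsymm d)
      rw [abs_cdet_symm, inv_pow] at h3
      exact (inv_le_inv₀ hdetpos (by positivity)).mp h3
    · apply rpow_one_div_le hd (abs_nonneg _) _ hU0.le
      exact le_trans (abs_det_le_norm_pow hd _) (pow_le_pow_left₀ (norm_nonneg _) hDnorm d)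
  have hPsucc : ∀ k, P (k+1) = P k * δ (k+1) := by
    intro k
    have hc : cdet (blockProd Do 0 (k+1)) = cdet (blockProd Do 0 k) * cdet (Do (k+1)) := by
      show cdet ((blockProd Do 0 k).trans (Do (0+k+1))) = _
      rw [Nat.zero_add, cdet_trans]
    rw [hPdef, hδdef]
    simp only [hc, abs_mul]
    rw [Real.mul_rpow (abs_nonneg _) (abs_nonneg _)]
  have hP0 : P 0 = 1 := by
    rw [hPdef]
    have : cdet (blockProd Do 0 0) = 1 := by
      show cdet (ContinuousLinearEquiv.refl ℝ (Euc d)) = 1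
      unfold cdet
      exact LinearMap.det_id
    simp [this]
  have hPlow : ∀ k, k ≤ n → lamL ^ k ≤ P k := by
    intro k
    induction k with
    | zero => intro _; rw [hP0]; simp
    | succ k IH =>
      intro hk
      rw [hPsucc, pow_succ]
      exact mul_le_mul (IH (by omega)) (hδbound (k+1) (by omega) hk).1 hlamL.le (hPpos k).le
  -- conformal bounds on the products at 0
  have hAconf : ∀ k, 1 ≤ k → k ≤ n →
      ‖((blockProd Do 0 k : Euc d ≃L[ℝ] Euc d) : Euc d →L[ℝ] Euc d)‖ ≤ κ * P k ∧
      ‖(((blockProd Do 0 k).symm : Euc d ≃L[ℝ] Euc d) : Euc d →L[ℝ] Euc d)‖ * P k ≤ κ := by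
    intro k h1 h2
    have := conformal_bounds hd (hconf k h1 h2)
    rw [hPdef]
    exact this
  -- the main estimate, by strong induction
  have main : ∀ m, m ≤ n →
      ‖((blockProd Dt 0 m : Euc d ≃L[ℝ] Euc d) : Euc d →L[ℝ] Euc d)‖ ≤ C₁ * P m := by
    intro m
    induction m using Nat.strong_induction_on with
    | _ m IH =>
      intro hm
      rcases Nat.eq_zero_or_pos m with rfl | hm1
      · rw [hP0, mul_one]
        calc ‖((blockProd Dt 0 0 : Euc d ≃L[ℝ] Euc d) : Euc d →L[ℝ] Euc d)‖ ≤ 1 := by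
              have hidc : ((blockProd Dt 0 0 : Euc d ≃L[ℝ] Euc d) : Euc d →L[ℝ] Euc d)
                  = ContinuousLinearMap.id ℝ (Euc d) := rfl
              rw [hidc]
              exact ContinuousLinearMap.norm_id_le
        _ ≤ C₁ := by linarith
      · -- per-term bound for the telescoping sum
        have hterm : ∀ i ∈ Finset.range m,
            ‖(((blockProd Do 0 m : Euc d ≃L[ℝ] Euc d) : Euc d →L[ℝ] Euc d)
                * (((blockProd Do 0 (i+1)).symm : Euc d ≃L[ℝ] Euc d) : Euc d →L[ℝ] Euc d))
              * (((Dt (i+1) : Euc d →L[ℝ] Euc d) - (Do (i+1) : Euc d →L[ℝ] Euc d))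
                * ((blockProd Dt 0 i : Euc d ≃L[ℝ] Euc d) : Euc d →L[ℝ] Euc d))‖
            ≤ (if i < N then α * Q * P m else 0)
              + (if i < N then 0 else α * C₁ * lamU ^ i * P m) := by
          intro i hi
          rw [Finset.mem_range] at hi
          have hi1n : i + 1 ≤ n := by omega
          have hAm := (hAconf m hm1 hm).1
          have hAsymm := (hAconf (i+1) (by omega) hi1n).2
          have hAsymm' : ‖(((blockProd Do 0 (i+1)).symm : Euc d ≃L[ℝ] Euc d) : Euc d →L[ℝ] Euc d)‖
              ≤ κ / P (i+1) := by
            rw [le_div_iff₀ (hPpos (i+1))]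
            exact hAsymm
          have hdiffi := hdiff i (by omega)
          have hδi := hδbound (i+1) (by omega) hi1n
          -- common bound
          have hcommon : ‖(((blockProd Do 0 m : Euc d ≃L[ℝ] Euc d) : Euc d →L[ℝ] Euc d)
                * (((blockProd Do 0 (i+1)).symm : Euc d ≃L[ℝ] Euc d) : Euc d →L[ℝ] Euc d))
              * (((Dt (i+1) : Euc d →L[ℝ] Euc d) - (Do (i+1) : Euc d →L[ℝ] Euc d))
                * ((blockProd Dt 0 i : Euc d ≃L[ℝ] Euc d) : Euc d →L[ℝ] Euc d))‖
              ≤ α * lamU ^ i * P m *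
                (‖((blockProd Dt 0 i : Euc d ≃L[ℝ] Euc d) : Euc d →L[ℝ] Euc d)‖ / P i) := by
            have hBi : (0:ℝ) ≤ ‖((blockProd Dt 0 i : Euc d ≃L[ℝ] Euc d) : Euc d →L[ℝ] Euc d)‖ :=
              norm_nonneg _
            have step1 : ‖(((blockProd Do 0 m : Euc d ≃L[ℝ] Euc d) : Euc d →L[ℝ] Euc d)
                  * (((blockProd Do 0 (i+1)).symm : Euc d ≃L[ℝ] Euc d) : Euc d →L[ℝ] Euc d))
                * (((Dt (i+1) : Euc d →L[ℝ] Euc d) - (Do (i+1) : Euc d →L[ℝ] Euc d))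
                  * ((blockProd Dt 0 i : Euc d ≃L[ℝ] Euc d) : Euc d →L[ℝ] Euc d))‖
                ≤ ((κ * P m) * (κ / P (i+1))) * ((C * R * lamU ^ i) *
                    ‖((blockProd Dt 0 i : Euc d ≃L[ℝ] Euc d) : Euc d →L[ℝ] Euc d)‖) := by
              calc ‖_ * (((Dt (i+1) : Euc d →L[ℝ] Euc d) - (Do (i+1) : Euc d →L[ℝ] Euc d))
                  * ((blockProd Dt 0 i : Euc d ≃L[ℝ] Euc d) : Euc d →L[ℝ] Euc d))‖
                  ≤ ‖((blockProd Do 0 m : Euc d ≃L[ℝ] Euc d) : Euc d →L[ℝ] Euc d)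
                      * (((blockProd Do 0 (i+1)).symm : Euc d ≃L[ℝ] Euc d) : Euc d →L[ℝ] Euc d)‖
                    * ‖((Dt (i+1) : Euc d →L[ℝ] Euc d) - (Do (i+1) : Euc d →L[ℝ] Euc d))
                      * ((blockProd Dt 0 i : Euc d ≃L[ℝ] Euc d) : Euc d →L[ℝ] Euc d)‖ :=
                    norm_mul_le _ _
                _ ≤ _ := by
                    apply mul_le_mul
                    · exact le_trans (norm_mul_le _ _)
                        (mul_le_mul hAm hAsymm' (norm_nonneg _)
                          (mul_nonneg hκ0.le (hPpos m).le))
                    · exact le_trans (norm_mul_le _ _)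
                        (mul_le_mul hdiffi le_rfl (norm_nonneg _) (by positivity))
                    · exact norm_nonneg _
                    · exact mul_nonneg (mul_nonneg hκ0.le (hPpos m).le)
                        (div_nonneg hκ0.le (hPpos (i+1)).le)
            have hPi1 : P i * lamL ≤ P (i+1) := by
              rw [hPsucc i]
              exact mul_le_mul_of_nonneg_left hδi.1 (hPpos i).le
            have hfrac : κ / P (i+1) ≤ κ / (P i * lamL) :=
              div_le_div_of_nonneg_left hκ0.le (mul_pos (hPpos i) hlamL) hPi1
            have step2 : ((κ * P m) * (κ / P (i+1))) * ((C * R * lamU ^ i) *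
                  ‖((blockProd Dt 0 i : Euc d ≃L[ℝ] Euc d) : Euc d →L[ℝ] Euc d)‖)
                ≤ ((κ * P m) * (κ / (P i * lamL))) * ((C * R * lamU ^ i) *
                  ‖((blockProd Dt 0 i : Euc d ≃L[ℝ] Euc d) : Euc d →L[ℝ] Euc d)‖) :=
              mul_le_mul_of_nonneg_right
                (mul_le_mul_of_nonneg_left hfrac (mul_nonneg hκ0.le (hPpos m).le))
                (mul_nonneg (by positivity) (norm_nonneg _))
            refine le_trans step1 (le_trans step2 (le_of_eq ?_))
            rw [hαdef]
            simp only [div_eq_mul_inv, mul_inv]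
            ring
          by_cases hiN : i < N
          · simp only [if_pos hiN]
            rw [add_zero]
            refine le_trans hcommon ?_
            have hratio : ‖((blockProd Dt 0 i : Euc d ≃L[ℝ] Euc d) : Euc d →L[ℝ] Euc d)‖ / P i
                ≤ (lamU / lamL) ^ i := by
              rw [div_le_iff₀ (hPpos i)]
              calc ‖((blockProd Dt 0 i : Euc d ≃L[ℝ] Euc d) : Euc d →L[ℝ] Euc d)‖
                  ≤ lamU ^ i := hAt_norm i (by omega)
              _ = (lamU / lamL) ^ i * lamL ^ i := by
                  rw [div_pow, div_mul_cancel₀]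
                  positivity
              _ ≤ (lamU / lamL) ^ i * P i :=
                  mul_le_mul_of_nonneg_left (hPlow i (by omega)) (by positivity)
            calc α * lamU ^ i * P m *
                  (‖((blockProd Dt 0 i : Euc d ≃L[ℝ] Euc d) : Euc d →L[ℝ] Euc d)‖ / P i)
                ≤ α * lamU ^ i * P m * (lamU / lamL) ^ i :=
                  mul_le_mul_of_nonneg_left hratio
                    (mul_nonneg (mul_nonneg hα0.le (by positivity)) (hPpos m).le)
              _ = α * (lamU^2 / lamL) ^ i * P m := by
                  rw [div_pow, div_pow]
                  field_simp
                  ring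
              _ ≤ α * Q * P m := by
                  have hq : (lamU^2 / lamL) ^ i ≤ Q := by
                    rw [hQdef]
                    calc (lamU^2 / lamL) ^ i ≤ (max 1 (lamU^2 / lamL)) ^ i :=
                        pow_le_pow_left₀ (by positivity) (le_max_right _ _) i
                    _ ≤ (max 1 (lamU^2 / lamL)) ^ N :=
                        pow_le_pow_right₀ (le_max_left _ _) (by omega)
                  have := mul_le_mul_of_nonneg_left hq hα0.le
                  exact mul_le_mul_of_nonneg_right this (hPpos m).le
          · simp only [if_neg hiN]
            rw [zero_add]
            refine le_trans hcommon ?_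
            have hratio : ‖((blockProd Dt 0 i : Euc d ≃L[ℝ] Euc d) : Euc d →L[ℝ] Euc d)‖ / P i
                ≤ C₁ := by
              rw [div_le_iff₀ (hPpos i)]
              rw [mul_comm C₁ (P i)] at *
              exact le_trans (IH i (by omega) (by omega)) (le_of_eq (mul_comm _ _))
            calc α * lamU ^ i * P m *
                  (‖((blockProd Dt 0 i : Euc d ≃L[ℝ] Euc d) : Euc d →L[ℝ] Euc d)‖ / P i)
                ≤ α * lamU ^ i * P m * C₁ :=
                  mul_le_mul_of_nonneg_left hratio
                    (mul_nonneg (mul_nonneg hα0.le (by positivity)) (hPpos m).le)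
              _ = α * C₁ * lamU ^ i * P m := by ring
        -- sum the bounds
        have hsum1 : ∑ i ∈ Finset.range m, (if i < N then α * Q * P m else 0)
            ≤ N * (α * Q * P m) := by
          rw [← Finset.sum_filter]
          have hcard : (Finset.filter (fun i => i < N) (Finset.range m)).card ≤ N := by
            have hsub : Finset.filter (fun i => i < N) (Finset.range m) ⊆ Finset.range N := by
              intro i hi
              simp only [Finset.mem_filter, Finset.mem_range] at hi ⊢
              exact hi.2
            simpa using Finset.card_le_card hsub
          rw [Finset.sum_const, nsmul_eq_mul]
          apply mul_le_mul_of_nonneg_right _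
            (mul_nonneg (mul_nonneg hα0.le (by linarith : (0:ℝ) ≤ Q)) (hPpos m).le)
          exact_mod_cast hcard
        have hsum2 : ∑ i ∈ Finset.range m, (if i < N then 0 else α * C₁ * lamU ^ i * P m)
            ≤ α * C₁ * P m * (lamU ^ N * (1 - lamU)⁻¹) := by
          rcases le_or_gt N m with hNm | hNm
          · rw [Finset.range_eq_Ico, ← Finset.sum_Ico_consecutive _ (Nat.zero_le N) hNm]
            have hz : ∑ i ∈ Finset.Ico 0 N, (if i < N then (0:ℝ) else α * C₁ * lamU ^ i * P m)
                = 0 := by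
              apply Finset.sum_eq_zero
              intro i hi
              rw [Finset.mem_Ico] at hi
              rw [if_pos hi.2]
            rw [hz, zero_add]
            have he : ∑ i ∈ Finset.Ico N m, (if i < N then (0:ℝ) else α * C₁ * lamU ^ i * P m)
                = ∑ i ∈ Finset.Ico N m, α * C₁ * lamU ^ i * P m := by
              apply Finset.sum_congr rfl
              intro i hi
              rw [Finset.mem_Ico] at hi
              rw [if_neg (by omega)]
            rw [he]
            have hgeo : ∑ i ∈ Finset.Ico N m, lamU ^ i ≤ lamU ^ N * (1 - lamU)⁻¹ := by
              rw [Finset.sum_Ico_eq_sum_range]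
              have hpow : ∀ i, lamU ^ (N + i) = lamU ^ N * lamU ^ i := fun i => pow_add _ _ _
              simp only [hpow, ← Finset.mul_sum]
              exact mul_le_mul_of_nonneg_left (geom_sum_le_inv hU0.le hlamU _) (by positivity)
            calc ∑ i ∈ Finset.Ico N m, α * C₁ * lamU ^ i * P m
                = (α * C₁ * P m) * ∑ i ∈ Finset.Ico N m, lamU ^ i := by
                  rw [Finset.mul_sum]
                  apply Finset.sum_congr rfl
                  intro i _
                  ring
              _ ≤ (α * C₁ * P m) * (lamU ^ N * (1 - lamU)⁻¹) :=
                  mul_le_mul_of_nonneg_left hgeo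
                    (mul_nonneg (mul_nonneg hα0.le hC₁0.le) (hPpos m).le)
          · have hz : ∑ i ∈ Finset.range m, (if i < N then (0:ℝ) else α * C₁ * lamU ^ i * P m)
                = 0 := by
              apply Finset.sum_eq_zero
              intro i hi
              rw [Finset.mem_range] at hi
              rw [if_pos (by omega)]
            rw [hz]
            exact mul_nonneg (mul_nonneg (mul_nonneg hα0.le hC₁0.le) (hPpos m).le)
              (mul_nonneg (by positivity) (by positivity))
        have hhalf : α * (lamU ^ N * (1 - lamU)⁻¹) ≤ 1/2 := by
          have h1 : lamU ^ N * (1 - lamU)⁻¹ ≤ M⁻¹ := by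
            calc lamU ^ N * (1 - lamU)⁻¹ ≤ ((1 - lamU) / M) * (1 - lamU)⁻¹ :=
                mul_le_mul_of_nonneg_right hN.le (by positivity)
            _ = M⁻¹ := by
                field_simp
          calc α * (lamU ^ N * (1 - lamU)⁻¹) ≤ α * M⁻¹ :=
              mul_le_mul_of_nonneg_left h1 hα0.le
          _ ≤ (M/2) * M⁻¹ := mul_le_mul_of_nonneg_right hMα (by positivity)
          _ = 1/2 := by field_simp
        -- put everything together
        have htel := telescope Dt Do m
        calc ‖((blockProd Dt 0 m : Euc d ≃L[ℝ] Euc d) : Euc d →L[ℝ] Euc d)‖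
            ≤ ‖((blockProd Do 0 m : Euc d ≃L[ℝ] Euc d) : Euc d →L[ℝ] Euc d)‖
              + ∑ i ∈ Finset.range m,
                ‖(((blockProd Do 0 m : Euc d ≃L[ℝ] Euc d) : Euc d →L[ℝ] Euc d)
                    * (((blockProd Do 0 (i+1)).symm : Euc d ≃L[ℝ] Euc d) : Euc d →L[ℝ] Euc d))
                  * (((Dt (i+1) : Euc d →L[ℝ] Euc d) - (Do (i+1) : Euc d →L[ℝ] Euc d))
                    * ((blockProd Dt 0 i : Euc d ≃L[ℝ] Euc d) : Euc d →L[ℝ] Euc d))‖ := by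
              rw [htel]
              exact le_trans (norm_add_le _ _) (by gcongr; exact norm_sum_le _ _)
          _ ≤ κ * P m + (N * (α * Q * P m) + α * C₁ * P m * (lamU ^ N * (1 - lamU)⁻¹)) := by
              apply add_le_add (hAconf m hm1 hm).1
              refine le_trans (Finset.sum_le_sum hterm) ?_
              rw [Finset.sum_add_distrib]
              exact add_le_add hsum1 hsum2
          _ ≤ C₁ * P m := by
              have hb1 : (N:ℝ) * (α * Q * P m) ≤ β * P m := by
                have : (N:ℝ) * (α * Q) ≤ β := by
                  rw [hβdef]; nlinarith [hα0.le, hQ1, (Nat.cast_nonneg N : (0:ℝ) ≤ N)]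
                calc (N:ℝ) * (α * Q * P m) = ((N:ℝ) * (α * Q)) * P m := by ring
                _ ≤ β * P m := mul_le_mul_of_nonneg_right this (hPpos m).le
              have hb2 : α * C₁ * P m * (lamU ^ N * (1 - lamU)⁻¹) ≤ (C₁/2) * P m := by
                calc α * C₁ * P m * (lamU ^ N * (1 - lamU)⁻¹)
                    = (α * (lamU ^ N * (1 - lamU)⁻¹)) * (C₁ * P m) := by ring
                _ ≤ (1/2) * (C₁ * P m) :=
                    mul_le_mul_of_nonneg_right hhalf
                      (mul_nonneg hC₁0.le (hPpos m).le)
                _ = (C₁/2) * P m := by ring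
              have hfin : κ * P m + β * P m + (C₁/2) * P m = C₁ * P m := by
                rw [hC₁def]; ring
              have hcomb := add_le_add (le_refl (κ * P m)) (add_le_add hb1 hb2)
              linarith [hcomb]
  have hgoal := main n le_rfl
  rw [hPdef] at hgoal
  exact hgoal
end
end
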